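/- Let T be a lexicographically ordered ω₁-tree and L ⊆ 𝓑(T). Then for every cofinal branch b ∈ 𝓑(T), the set {q ∈ R_L : b ∈ Z_q or b ∩ A_q ≠ ∅} is dense in R_L, i.e., every condition of R_L has an extension in this set. -/

import Mathlib

noncomputable section

open Cardinal Set

def omega1 : Ordinal := (Cardinal.aleph 1).ord

def omega2 : Ordinal := (Cardinal.aleph 2).ord

/-- The height of an element `t`: the order type of its set of strict predecessors. -/
def htOf {X : Type} (lt : X → X → Prop)
    (wo : ∀ t : X, IsWellOrder {s : X // lt s t} fun a b => lt a.1 b.1) (t : X) : Ordinal :=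
  @Ordinal.type {s : X // lt s t} (fun a b => lt a.1 b.1) (wo t)

/-- A lexicographically ordered (normal) `ω₁`-tree. -/
structure LexOmega1Tree where
  T : Type
  lt : T → T → Prop
  lt_irrefl : ∀ a : T, ¬ lt a a
  lt_trans : ∀ {a b c : T}, lt a b → lt b c → lt a c
  /-- the strict predecessors of any element are well-ordered -/
  predWO : ∀ t : T, IsWellOrder {s : T // lt s t} fun a b => lt a.1 b.1
  /-- every level is countable -/
  level_countable : ∀ α : Ordinal, {t : T | htOf lt predWO t = α}.Countable
  /-- levels are nonempty exactly below `ω₁` -/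
  level_nonempty : ∀ α : Ordinal, (∃ t : T, htOf lt predWO t = α) ↔ α < omega1
  /-- normality: distinct elements of the same limit height have different predecessors -/
  normal : ∀ s t : T, htOf lt predWO s = htOf lt predWO t →
    Order.IsSuccLimit (htOf lt predWO s) → (∀ u : T, lt u s ↔ lt u t) → s = t
  /-- the lexicographic comparison of distinct elements of equal height -/
  lexlt : T → T → Prop
  lexlt_same : ∀ a b : T, lexlt a b → htOf lt predWO a = htOf lt predWO b ∧ a ≠ b
  lexlt_tricho : ∀ a b : T, htOf lt predWO a = htOf lt predWO b → a ≠ b →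
    lexlt a b ∨ lexlt b a
  lexlt_asymm : ∀ a b : T, lexlt a b → ¬ lexlt b a
  lexlt_trans : ∀ {a b c : T}, lexlt a b → lexlt b c → lexlt a c
  /-- coherence: the lexicographic comparison is decided at the splitting level -/
  lexlt_coh : ∀ a b a' b' : T, lexlt a b → lt a a' → lt b b' →
    htOf lt predWO a' = htOf lt predWO b' → lexlt a' b'

namespace LexOmega1Tree

variable (S : LexOmega1Tree)

def ht : S.T → Ordinal := htOf S.lt S.predWO

def le (a b : S.T) : Prop := S.lt a b ∨ a = b

/-- a cofinal branch : a downward closed chain meeting every level -/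
def IsBranch (b : Set S.T) : Prop :=
  (∀ s t : S.T, t ∈ b → S.lt s t → s ∈ b) ∧
  (∀ s t : S.T, s ∈ b → t ∈ b → s = t ∨ S.lt s t ∨ S.lt t s) ∧
  (∀ α : Ordinal, α < omega1 → ∃ t ∈ b, S.ht t = α)

/-- the set `𝓑(T)` of cofinal branches -/
def Branch : Type := {b : Set S.T // S.IsBranch b}

/-- the lexicographic order on branches (and on arbitrary sets of nodes) -/
def blex (A B : Set S.T) : Prop := ∃ a ∈ A, ∃ b ∈ B, S.lexlt a b

/-- the order topology on `(𝓑(T), <lex)`, generated by the open rays -/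
def branchTop : TopologicalSpace S.Branch :=
  TopologicalSpace.generateFrom
    {s : Set S.Branch | ∃ a : S.Branch, s = {x | S.blex a.1 x.1} ∨ s = {x | S.blex x.1 a.1}}

/-- `b` is a local right end point of the downward closed subtree `W` -/
def IsLocalRightEP (W b : Set S.T) : Prop :=
  ∃ t ∈ b, ∀ s ∈ b, S.ht t ≤ S.ht s →
    ∀ u ∈ W, S.ht u = S.ht s → S.le t u → u = s ∨ S.lexlt u s

/-- `b` is a local left end point of the downward closed subtree `W` -/
def IsLocalLeftEP (W b : Set S.T) : Prop :=
  ∃ t ∈ b, ∀ s ∈ b, S.ht t ≤ S.ht s →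
    ∀ u ∈ W, S.ht u = S.ht s → S.le t u → u = s ∨ S.lexlt s u

def IsLocalEP (W b : Set S.T) : Prop := S.IsLocalRightEP W b ∨ S.IsLocalLeftEP W b

end LexOmega1Tree

/-- A condition `p = (Z_p, A_p)` of the poset `R_L`: `Z_p ⊆ L` is countable, nonempty,
and disjoint from the set of local end points of `⋃L`; `A_p` is a countable antichain
of `T` disjoint from `⋃Z_p`. -/
structure RCond (S : LexOmega1Tree) (L : Set (Set S.T)) where
  Z : Set (Set S.T)
  A : Set S.T
  Z_sub : Z ⊆ L
  Z_countable : Z.Countable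
  Z_nonempty : Z.Nonempty
  Z_noEP : ∀ b ∈ Z, ¬ S.IsLocalEP {t : S.T | ∃ c ∈ L, t ∈ c} b
  A_countable : A.Countable
  A_antichain : ∀ a ∈ A, ∀ b ∈ A, a ≠ b → ¬ S.lt a b ∧ ¬ S.lt b a
  A_disj : ∀ t ∈ A, ∀ b ∈ Z, t ∉ b

/-- `RCond.le q p` means `q ≤ p`, i.e. `q` extends `p`. -/
def RCond.le {S : LexOmega1Tree} {L : Set (Set S.T)} (q p : RCond S L) : Prop :=
  p.Z ⊆ q.Z ∧ p.A ⊆ q.A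


section Aux

namespace LexOmega1Tree

variable (S : LexOmega1Tree)

lemma ht_lt_of_lt {s t : S.T} (h : S.lt s t) : S.ht s < S.ht t := by
  haveI := S.predWO t
  haveI := S.predWO s
  have key : S.ht s =
      Ordinal.typein (fun a b : {x // S.lt x t} => S.lt a.1 b.1) ⟨s, h⟩ := by
    rw [← Ordinal.type_subrel]
    exact Ordinal.type_eq.2 ⟨⟨⟨fun u => ⟨⟨u.1, S.lt_trans u.2 h⟩, u.2⟩,
      fun x => ⟨x.1.1, x.2⟩, fun u => rfl, fun x => rfl⟩, Iff.rfl⟩⟩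
  calc S.ht s = _ := key
    _ < Ordinal.type (fun a b : {x // S.lt x t} => S.lt a.1 b.1) :=
        Ordinal.typein_lt_type _ _
    _ = S.ht t := rfl

lemma ht_lt_omega1 (t : S.T) : S.ht t < omega1 :=
  (S.level_nonempty (S.ht t)).1 ⟨t, rfl⟩

end LexOmega1Tree

end Aux

/-- For every cofinal branch `b ∈ 𝓑(T)`, the set of conditions
`q ∈ R_L` with `b ∈ Z_q` or `b ∩ A_q ≠ ∅` is dense in `R_L`. -/
theorem stmt10 (S : LexOmega1Tree) (L : Set (Set S.T)) (hL : ∀ b ∈ L, S.IsBranch b)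
    (b : Set S.T) (hb : S.IsBranch b) (p : RCond S L) :
    ∃ q : RCond S L, RCond.le q p ∧ (b ∈ q.Z ∨ ∃ t ∈ q.A, t ∈ b) := by
  by_cases hZ : b ∈ p.Z
  · exact ⟨p, ⟨subset_rfl, subset_rfl⟩, Or.inl hZ⟩
  by_cases hA : ∃ t ∈ p.A, t ∈ b
  · exact ⟨p, ⟨subset_rfl, subset_rfl⟩, Or.inr hA⟩
  push_neg at hA
  -- splitting witnesses: for each c ∈ Z_p there is s ∈ b with s ∉ c
  have hsplit : ∀ c : ↥p.Z, ∃ s, s ∈ b ∧ s ∉ c.1 := by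
    rintro ⟨c, hc⟩
    by_contra hcon
    push_neg at hcon
    have hbc : b ⊆ c := fun s hs => hcon s hs
    have hcb : c ⊆ b := by
      intro x hx
      obtain ⟨y, hyb, hy⟩ := hb.2.2 (S.ht x) (S.ht_lt_omega1 x)
      have hyc : y ∈ c := hbc hyb
      rcases (hL c (p.Z_sub hc)).2.1 x y hx hyc with h | h | h
      · rw [h]; exact hyb
      · exact absurd (hy ▸ S.ht_lt_of_lt h) (lt_irrefl _)
      · exact absurd (hy ▸ S.ht_lt_of_lt h) (lt_irrefl _)
    exact hZ ((Set.Subset.antisymm hbc hcb) ▸ hc)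
  choose w hw1 hw2 using hsplit
  haveI : Countable ↥p.A := p.A_countable.to_subtype
  haveI : Countable ↥p.Z := p.Z_countable.to_subtype
  set f : (↥p.A ⊕ ↥p.Z) → Ordinal :=
    fun i => Sum.rec (fun a => S.ht a.1) (fun c => S.ht (w c)) i with hf
  have hbound : (⨆ i, f i) < omega1 := by
    apply Ordinal.iSup_lt_ord
    · rw [show omega1 = (Cardinal.aleph 1).ord from rfl,
        Cardinal.isRegular_aleph_one.cof_eq]
      exact lt_of_le_of_lt Cardinal.mk_le_aleph0 Cardinal.aleph0_lt_aleph_one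
    · rintro (a | c)
      · exact S.ht_lt_omega1 _
      · exact S.ht_lt_omega1 _
  set α : Ordinal := Order.succ (⨆ i, f i) with hα
  have homega1lim : Order.IsSuccLimit omega1 := Cardinal.isSuccLimit_ord (Cardinal.aleph0_le_aleph 1)
  have hαlt : α < omega1 := homega1lim.succ_lt hbound
  obtain ⟨t, htb, htα⟩ := hb.2.2 α hαlt
  -- heights of A_p elements are below ht t
  have hAht : ∀ a ∈ p.A, S.ht a < S.ht t := by
    intro a ha
    rw [htα, hα]
    exact Order.lt_succ_iff.2 (Ordinal.le_iSup f (Sum.inl ⟨a, ha⟩))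
  -- t avoids every branch in Z_p
  have htZ : ∀ c ∈ p.Z, t ∉ c := by
    intro c hc htc
    have hwht : S.ht (w ⟨c, hc⟩) < S.ht t := by
      rw [htα, hα]
      exact Order.lt_succ_iff.2 (Ordinal.le_iSup f (Sum.inr ⟨c, hc⟩))
    rcases hb.2.1 t (w ⟨c, hc⟩) htb (hw1 ⟨c, hc⟩) with h | h | h
    · exact hw2 ⟨c, hc⟩ (h ▸ htc)
    · exact absurd (S.ht_lt_of_lt h) (lt_asymm hwht)
    · exact hw2 ⟨c, hc⟩ ((hL c (p.Z_sub hc)).1 _ _ htc h)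
  -- t is incomparable with every element of A_p
  have htinc : ∀ a ∈ p.A, ¬ S.lt a t ∧ ¬ S.lt t a := by
    intro a ha
    constructor
    · intro h
      exact hA a ha (hb.1 a t htb h)
    · intro h
      exact absurd (S.ht_lt_of_lt h) (lt_asymm (hAht a ha))
  refine ⟨⟨p.Z, insert t p.A, p.Z_sub, p.Z_countable, p.Z_nonempty, p.Z_noEP,
    p.A_countable.insert t, ?_, ?_⟩, ⟨subset_rfl, Set.subset_insert _ _⟩,
    Or.inr ⟨t, Set.mem_insert _ _, htb⟩⟩
  · rintro a (rfl | ha) a' (rfl | ha') hne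
    · exact absurd rfl hne
    · exact ⟨(htinc a' ha').2, (htinc a' ha').1⟩
    · exact ⟨(htinc a ha).1, (htinc a ha).2⟩
    · exact p.A_antichain a ha a' ha' hne
  · rintro u (rfl | hu) c hc
    · exact htZ c hc
    · exact p.A_disj u hu c hc
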